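/- There exist matroids $M_1 = (E, \mathcal{B}_1)$ and $M_2 = (E, \mathcal{B}_2)$ such that the pair $(M_1, M_2)$ satisfies the Reconfigurability of Common Bases property (RCB), while the pair $(2M_1, 2M_2)$ of their 2-fold matroid unions does not satisfy (RCB). -/

import Mathlib

/-- Reconfigurability of Common Bases for a pair of matroids. -/
def RCB {E : Type*} (M₁ M₂ : Matroid E) : Prop :=
  ∀ B B' : Set E, M₁.IsBase B → M₂.IsBase B → M₁.IsBase B' → M₂.IsBase B' →
    ∃ (n : ℕ) (seq : Fin (n + 1) → Set E), seq 0 = B ∧ seq (Fin.last n) = B' ∧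
      (∀ i, M₁.IsBase (seq i) ∧ M₂.IsBase (seq i)) ∧
      ∀ i : Fin n, (seq i.castSucc \ seq i.succ).ncard = 1 ∧
        (seq i.succ \ seq i.castSucc).ncard = 1

namespace Stmt15Aux

abbrev α := Fin 8

def dec (m : ℕ) : Finset α := Finset.univ.filter (fun i => m.testBit i.val)

lemma mem_dec {m : ℕ} {i : α} : i ∈ dec m ↔ m.testBit i.val = true := by
  simp [dec]

lemma dec_inj {m m' : ℕ} (hm : m < 256) (hm' : m' < 256) (h : dec m = dec m') : m = m' := by
  refine Nat.eq_of_testBit_eq fun i => ?_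
  by_cases hi : i < 8
  · have := Finset.ext_iff.mp h ⟨i, hi⟩
    simp only [mem_dec] at this
    by_cases h1 : m.testBit i <;> by_cases h2 : m'.testBit i <;> simp_all
  · have h8 : (256:ℕ) ≤ 2 ^ i := by
      calc (256:ℕ) = 2 ^ 8 := by norm_num
      _ ≤ 2 ^ i := Nat.pow_le_pow_right (by norm_num) (by omega)
    rw [Nat.testBit_lt_two_pow (lt_of_lt_of_le hm h8),
      Nat.testBit_lt_two_pow (lt_of_lt_of_le hm' h8)]

lemma dec_or (a b : ℕ) : dec (a ||| b) = dec a ∪ dec b := by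
  ext i; simp [mem_dec, Nat.testBit_or, Finset.mem_union]

lemma dec_exchange {m : ℕ} {e f : α} (he : m.testBit e.val = true) (hf : m.testBit f.val = false) :
    insert f ((dec m).erase e) = dec ((m ^^^ 2 ^ e.val) ||| 2 ^ f.val) := by
  have hef : e ≠ f := by intro h; rw [h, hf] at he; exact Bool.noConfusion he
  ext i
  simp only [Finset.mem_insert, Finset.mem_erase, mem_dec, Nat.testBit_or, Nat.testBit_xor,
    Nat.testBit_two_pow]
  rcases eq_or_ne i e with rfl | hie
  · simp [he, hef, show ¬((f:ℕ) = (i:ℕ)) from fun h => hef (Fin.val_injective h).symm]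
  · rcases eq_or_ne i f with rfl | hif
    · simp
    · have h1 : ¬((e:ℕ) = (i:ℕ)) := fun h => hie (Fin.val_injective h).symm
      have h2 : ¬((f:ℕ) = (i:ℕ)) := fun h => hif (Fin.val_injective h).symm
      simp [h1, h2, hie, hif]

def famBase (L : List ℕ) (B : Set α) : Prop := ∃ m ∈ L, B = ↑(dec m)

lemma famExchange (L : List ℕ)
    (h : ∀ m₁ ∈ L, ∀ m₂ ∈ L, ∀ e ∈ List.range 8, m₁.testBit e = true → m₂.testBit e = false →
      ∃ f ∈ List.range 8, m₂.testBit f = true ∧ m₁.testBit f = false ∧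
        ((m₁ ^^^ 2 ^ e) ||| 2 ^ f) ∈ L) :
    Matroid.ExchangeProperty (famBase L) := by
  rintro X Y ⟨m₁, h₁, rfl⟩ ⟨m₂, h₂, rfl⟩ a ha
  simp only [Set.mem_diff, Finset.mem_coe, mem_dec] at ha
  obtain ⟨hf1, hf2⟩ := ha
  have hf2' : m₂.testBit a.val = false := by
    cases hb : m₂.testBit a.val; · rfl
    · exact absurd hb hf2
  obtain ⟨f, hfr, hbf1, hbf2, hmem⟩ :=
    h m₁ h₁ m₂ h₂ a.val (List.mem_range.mpr a.isLt) hf1 hf2'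
  have hf8 : f < 8 := by simpa [List.mem_range] using hfr
  refine ⟨⟨f, hf8⟩, ?_, (m₁ ^^^ 2 ^ a.val) ||| 2 ^ f, hmem, ?_⟩
  · simp only [Set.mem_diff, Finset.mem_coe, mem_dec]
    exact ⟨hbf1, by simp [hbf2]⟩
  · rw [← Finset.coe_erase, ← Finset.coe_insert, dec_exchange hf1 hbf2]

def mk (L : List ℕ) (m₀ : ℕ) (h₀ : m₀ ∈ L)
    (hex : ∀ m₁ ∈ L, ∀ m₂ ∈ L, ∀ e ∈ List.range 8, m₁.testBit e = true → m₂.testBit e = false →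
      ∃ f ∈ List.range 8, m₂.testBit f = true ∧ m₁.testBit f = false ∧
        ((m₁ ^^^ 2 ^ e) ||| 2 ^ f) ∈ L) : Matroid α :=
  Matroid.ofExistsFiniteIsBase Set.univ (famBase L)
    ⟨↑(dec m₀), ⟨m₀, h₀, rfl⟩, (dec m₀).finite_toSet⟩
    (famExchange L hex) (fun _ _ => Set.subset_univ _)

lemma mk_base {L m₀ h₀ hex} {B : Set α} : (mk L m₀ h₀ hex).IsBase B ↔ famBase L B := Iff.rfl


def M1L : List ℕ := [7, 11, 19, 35, 67, 131, 37, 69, 133, 41, 73, 137, 49, 81, 145, 38, 70, 134, 42, 74, 138, 50, 82, 146]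
def M2L : List ℕ := [11, 19, 67, 131, 25, 73, 137, 81, 145, 193, 14, 22, 70, 134, 42, 50, 98, 162, 28, 76, 140, 84, 148, 196, 56, 104, 168, 112, 176, 224]
def N1L : List ℕ := [111, 175, 207, 119, 183, 215, 123, 187, 219]
def N2L : List ℕ := [95, 159, 207, 215, 123, 187, 235, 243, 221, 249, 126, 190, 238, 246, 252]
def CBL : List ℕ := [11, 19, 67, 131, 73, 137, 81, 145, 70, 134, 42, 50]
def CBNL : List ℕ := [207, 215, 123, 187]


lemma dec_disjoint_of {m₁ m₂ : ℕ} (h : m₁ &&& m₂ = 0) : Disjoint (dec m₁) (dec m₂) := by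
  rw [Finset.disjoint_left]
  intro a ha hb
  have h2 := congrArg (fun x => Nat.testBit x a.val) h
  simp only [Nat.testBit_and, mem_dec.mp ha, mem_dec.mp hb, Nat.zero_testBit] at h2
  exact Bool.noConfusion h2

lemma land_eq_zero_of {m₁ m₂ : ℕ} (h₁ : m₁ < 256) (h₂ : m₂ < 256)
    (h : Disjoint (dec m₁) (dec m₂)) : m₁ &&& m₂ = 0 := by
  refine Nat.eq_of_testBit_eq fun i => ?_
  simp only [Nat.testBit_and, Nat.zero_testBit]
  by_cases hi : i < 8
  · by_cases t1 : m₁.testBit i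
    · have hmem : (⟨i, hi⟩ : α) ∈ dec m₁ := mem_dec.mpr t1
      have : (⟨i, hi⟩ : α) ∉ dec m₂ := Finset.disjoint_left.mp h hmem
      have t2 : m₂.testBit i = false := by
        cases hb : m₂.testBit i
        · rfl
        · exact absurd (mem_dec.mpr hb) this
      simp [t2]
    · simp [t1]
  · have h8 : (256:ℕ) ≤ 2 ^ i := by
      calc (256:ℕ) = 2 ^ 8 := by norm_num
      _ ≤ 2 ^ i := Nat.pow_le_pow_right (by norm_num) (by omega)
    simp [Nat.testBit_lt_two_pow (lt_of_lt_of_le h₁ h8)]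

lemma union_char {ML NL : List ℕ} {MM NN : Matroid α}
    (hMM : ∀ B, MM.IsBase B ↔ famBase ML B) (hNN : ∀ B, NN.IsBase B ↔ famBase NL B)
    (hb : ∀ m ∈ ML, m < 256)
    (fwd : ∀ m ∈ NL, ∃ m₁ ∈ ML, ∃ m₂ ∈ ML, m₁ &&& m₂ = 0 ∧ m₁ ||| m₂ = m)
    (bwd : ∀ m₁ ∈ ML, ∀ m₂ ∈ ML, m₁ &&& m₂ = 0 → (m₁ ||| m₂) ∈ NL) :
    ∀ B : Set α, NN.IsBase B ↔
      ∃ B₁ B₂ : Set α, MM.IsBase B₁ ∧ MM.IsBase B₂ ∧ Disjoint B₁ B₂ ∧ B = B₁ ∪ B₂ := by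
  intro B
  rw [hNN]
  constructor
  · rintro ⟨m, hm, rfl⟩
    obtain ⟨m₁, h₁, m₂, h₂, hd, hu⟩ := fwd m hm
    refine ⟨↑(dec m₁), ↑(dec m₂), (hMM _).mpr ⟨m₁, h₁, rfl⟩, (hMM _).mpr ⟨m₂, h₂, rfl⟩, ?_, ?_⟩
    · exact Finset.disjoint_coe.mpr (dec_disjoint_of hd)
    · rw [← hu, dec_or, Finset.coe_union]
  · rintro ⟨B₁, B₂, hB₁, hB₂, hd, rfl⟩
    obtain ⟨m₁, h₁, rfl⟩ := (hMM _).mp hB₁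
    obtain ⟨m₂, h₂, rfl⟩ := (hMM _).mp hB₂
    refine ⟨m₁ ||| m₂,
      bwd m₁ h₁ m₂ h₂ (land_eq_zero_of (hb _ h₁) (hb _ h₂) (Finset.disjoint_coe.mp hd)), ?_⟩
    rw [dec_or, Finset.coe_union]


def Conn {E : Type*} (M₁ M₂ : Matroid E) (B B' : Set E) : Prop :=
  ∃ (n : ℕ) (seq : Fin (n + 1) → Set E), seq 0 = B ∧ seq (Fin.last n) = B' ∧
    (∀ i, M₁.IsBase (seq i) ∧ M₂.IsBase (seq i)) ∧
    ∀ i : Fin n, (seq i.castSucc \ seq i.succ).ncard = 1 ∧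
      (seq i.succ \ seq i.castSucc).ncard = 1

lemma fin_congr {E : Type*} {k : ℕ} (s : Fin k → Set E) {i j : Fin k} (h : (i : ℕ) = (j : ℕ)) :
    s i = s j := congrArg s (Fin.ext h)

lemma Conn.trans {E : Type*} {M₁ M₂ : Matroid E} {B B' B'' : Set E}
    (h : Conn M₁ M₂ B B') (h' : Conn M₁ M₂ B' B'') : Conn M₁ M₂ B B'' := by
  obtain ⟨n, s, hs0, hsl, hsb, hss⟩ := h
  obtain ⟨m, t, ht0, htl, htb, hts⟩ := h'
  refine ⟨n + m, fun i => if h : (i : ℕ) < n then s ⟨i, by omega⟩ else t ⟨(i : ℕ) - n, by omega⟩,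
    ?_, ?_, fun i => ?_, fun i => ?_⟩
  · dsimp only
    split
    · next h0 => exact (fin_congr s (by simp)).trans hs0
    · next h0 =>
      have hn : n = 0 := by simpa using h0
      have hBB : B' = B := by
        rw [← hs0, ← hsl]
        exact congrArg s (by subst hn; exact Fin.ext (by simp))
      exact (fin_congr t (by simp)).trans (ht0.trans hBB)
  · dsimp only
    split
    · next h0 => exfalso; simp only [Fin.val_last] at h0; omega
    · next h0 => exact (fin_congr t (by simp)).trans htl
  · dsimp only
    split
    · exact hsb _
    · exact htb _
  · dsimp only
    rcases lt_trichotomy ((i : ℕ) + 1) n with hlt | heq | hgt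
    · rw [dif_pos (show ((i.castSucc : Fin (n + m + 1)) : ℕ) < n by simp; omega),
        dif_pos (show ((i.succ : Fin (n + m + 1)) : ℕ) < n by simp; omega)]
      exact hss ⟨(i : ℕ), by omega⟩
    · rw [dif_pos (show ((i.castSucc : Fin (n + m + 1)) : ℕ) < n by simp; omega),
        dif_neg (show ¬ ((i.succ : Fin (n + m + 1)) : ℕ) < n by simp; omega)]
      have hi : (i : ℕ) < n := by omega
      have c := hss ⟨(i : ℕ), hi⟩
      have e2 : s ((⟨(i : ℕ), hi⟩ : Fin n).succ) =
          t ⟨((i.succ : Fin (n + m + 1)) : ℕ) - n, by omega⟩ := by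
        have r1 : s ((⟨(i : ℕ), hi⟩ : Fin n).succ) = s (Fin.last n) :=
          fin_congr s (by simp [Fin.val_succ, Fin.val_last]; omega)
        have r2 : t ⟨((i.succ : Fin (n + m + 1)) : ℕ) - n, by omega⟩ = t 0 :=
          fin_congr t (by simp [Fin.val_succ]; omega)
        rw [r1, r2, hsl, ht0]
      rw [e2] at c
      exact c
    · rw [dif_neg (show ¬ ((i.castSucc : Fin (n + m + 1)) : ℕ) < n by simp; omega),
        dif_neg (show ¬ ((i.succ : Fin (n + m + 1)) : ℕ) < n by simp; omega)]
      have hi : (i : ℕ) - n < m := by omega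
      have c := hts ⟨(i : ℕ) - n, hi⟩
      have e2 : t ((⟨(i : ℕ) - n, hi⟩ : Fin m).succ) =
          t ⟨((i.succ : Fin (n + m + 1)) : ℕ) - n, by omega⟩ :=
        fin_congr t (by simp [Fin.val_succ]; omega)
      rw [e2] at c
      exact c

lemma conn_of_vec {M₁ M₂ : Matroid α} {L₁ L₂ : List ℕ} {a b : ℕ}
    (hbase₁ : ∀ m ∈ L₁, M₁.IsBase ↑(dec m)) (hbase₂ : ∀ m ∈ L₂, M₂.IsBase ↑(dec m))
    (n : ℕ) (f : Fin (n + 1) → ℕ)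
    (hmem : ∀ i, f i ∈ L₁ ∧ f i ∈ L₂)
    (hadj : ∀ i : Fin n, (dec (f i.castSucc) \ dec (f i.succ)).card = 1 ∧
      (dec (f i.succ) \ dec (f i.castSucc)).card = 1)
    (h0 : f 0 = a) (hl : f (Fin.last n) = b) :
    Conn M₁ M₂ ↑(dec a) ↑(dec b) := by
  refine ⟨n, fun i => ↑(dec (f i)),
    by show (↑(dec (f 0)) : Set α) = ↑(dec a); rw [h0],
    by show (↑(dec (f (Fin.last n))) : Set α) = ↑(dec b); rw [hl],
    fun i => ⟨hbase₁ _ (hmem i).1, hbase₂ _ (hmem i).2⟩, fun i => ?_⟩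
  constructor
  · rw [← Finset.coe_sdiff, Set.ncard_coe_finset]
    exact (hadj i).1
  · rw [← Finset.coe_sdiff, Set.ncard_coe_finset]
    exact (hadj i).2

set_option maxRecDepth 40000

lemma m1exm : ∀ m₁ ∈ M1L, ∀ m₂ ∈ M1L, ∀ e ∈ List.range 8, m₁.testBit e = true → m₂.testBit e = false →
      ∃ f ∈ List.range 8, m₂.testBit f = true ∧ m₁.testBit f = false ∧
        ((m₁ ^^^ 2 ^ e) ||| 2 ^ f) ∈ M1L := by decide

lemma m2exm : ∀ m₁ ∈ M2L, ∀ m₂ ∈ M2L, ∀ e ∈ List.range 8, m₁.testBit e = true → m₂.testBit e = false →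
      ∃ f ∈ List.range 8, m₂.testBit f = true ∧ m₁.testBit f = false ∧
        ((m₁ ^^^ 2 ^ e) ||| 2 ^ f) ∈ M2L := by decide

lemma n1exm : ∀ m₁ ∈ N1L, ∀ m₂ ∈ N1L, ∀ e ∈ List.range 8, m₁.testBit e = true → m₂.testBit e = false →
      ∃ f ∈ List.range 8, m₂.testBit f = true ∧ m₁.testBit f = false ∧
        ((m₁ ^^^ 2 ^ e) ||| 2 ^ f) ∈ N1L := by decide

lemma n2exm : ∀ m₁ ∈ N2L, ∀ m₂ ∈ N2L, ∀ e ∈ List.range 8, m₁.testBit e = true → m₂.testBit e = false →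
      ∃ f ∈ List.range 8, m₂.testBit f = true ∧ m₁.testBit f = false ∧
        ((m₁ ^^^ 2 ^ e) ||| 2 ^ f) ∈ N2L := by decide

def M1 : Matroid α := mk M1L 7 (by decide) m1exm
def M2 : Matroid α := mk M2L 11 (by decide) m2exm
def N1 : Matroid α := mk N1L 111 (by decide) n1exm
def N2 : Matroid α := mk N2L 95 (by decide) n2exm

lemma M1_base (B : Set α) : M1.IsBase B ↔ famBase M1L B := Iff.rfl
lemma M2_base (B : Set α) : M2.IsBase B ↔ famBase M2L B := Iff.rfl
lemma N1_base (B : Set α) : N1.IsBase B ↔ famBase N1L B := Iff.rfl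
lemma N2_base (B : Set α) : N2.IsBase B ↔ famBase N2L B := Iff.rfl

lemma hbase1 : ∀ m ∈ M1L, M1.IsBase ↑(dec m) := fun m hm => ⟨m, hm, rfl⟩
lemma hbase2 : ∀ m ∈ M2L, M2.IsBase ↑(dec m) := fun m hm => ⟨m, hm, rfl⟩

lemma toHub : ∀ m ∈ CBL, Conn M1 M2 ↑(dec m) ↑(dec 11) := by
  intro m hm
  fin_cases hm
  · exact conn_of_vec hbase1 hbase2 0 ![11] (by decide) (by decide) (by decide) (by decide)
  · exact conn_of_vec hbase1 hbase2 1 ![19, 11] (by decide) (by decide) (by decide) (by decide)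
  · exact conn_of_vec hbase1 hbase2 1 ![67, 11] (by decide) (by decide) (by decide) (by decide)
  · exact conn_of_vec hbase1 hbase2 1 ![131, 11] (by decide) (by decide) (by decide) (by decide)
  · exact conn_of_vec hbase1 hbase2 1 ![73, 11] (by decide) (by decide) (by decide) (by decide)
  · exact conn_of_vec hbase1 hbase2 1 ![137, 11] (by decide) (by decide) (by decide) (by decide)
  · exact conn_of_vec hbase1 hbase2 2 ![81, 19, 11] (by decide) (by decide) (by decide) (by decide)
  · exact conn_of_vec hbase1 hbase2 2 ![145, 19, 11] (by decide) (by decide) (by decide) (by decide)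
  · exact conn_of_vec hbase1 hbase2 2 ![70, 67, 11] (by decide) (by decide) (by decide) (by decide)
  · exact conn_of_vec hbase1 hbase2 2 ![134, 131, 11] (by decide) (by decide) (by decide) (by decide)
  · exact conn_of_vec hbase1 hbase2 1 ![42, 11] (by decide) (by decide) (by decide) (by decide)
  · exact conn_of_vec hbase1 hbase2 2 ![50, 19, 11] (by decide) (by decide) (by decide) (by decide)

lemma fromHub : ∀ m ∈ CBL, Conn M1 M2 ↑(dec 11) ↑(dec m) := by
  intro m hm
  fin_cases hm
  · exact conn_of_vec hbase1 hbase2 0 ![11] (by decide) (by decide) (by decide) (by decide)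
  · exact conn_of_vec hbase1 hbase2 1 ![11, 19] (by decide) (by decide) (by decide) (by decide)
  · exact conn_of_vec hbase1 hbase2 1 ![11, 67] (by decide) (by decide) (by decide) (by decide)
  · exact conn_of_vec hbase1 hbase2 1 ![11, 131] (by decide) (by decide) (by decide) (by decide)
  · exact conn_of_vec hbase1 hbase2 1 ![11, 73] (by decide) (by decide) (by decide) (by decide)
  · exact conn_of_vec hbase1 hbase2 1 ![11, 137] (by decide) (by decide) (by decide) (by decide)
  · exact conn_of_vec hbase1 hbase2 2 ![11, 19, 81] (by decide) (by decide) (by decide) (by decide)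
  · exact conn_of_vec hbase1 hbase2 2 ![11, 19, 145] (by decide) (by decide) (by decide) (by decide)
  · exact conn_of_vec hbase1 hbase2 2 ![11, 67, 70] (by decide) (by decide) (by decide) (by decide)
  · exact conn_of_vec hbase1 hbase2 2 ![11, 131, 134] (by decide) (by decide) (by decide) (by decide)
  · exact conn_of_vec hbase1 hbase2 1 ![11, 42] (by decide) (by decide) (by decide) (by decide)
  · exact conn_of_vec hbase1 hbase2 2 ![11, 19, 50] (by decide) (by decide) (by decide) (by decide)

lemma mem_CBL : ∀ m ∈ M1L, m ∈ M2L → m ∈ CBL := by decide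

lemma mem_CBNL : ∀ m ∈ N1L, m ∈ N2L → m ∈ CBNL := by decide

lemma bound_M1L : ∀ m ∈ M1L, m < 256 := by decide
lemma bound_M2L : ∀ m ∈ M2L, m < 256 := by decide
lemma bound_N1L : ∀ m ∈ N1L, m < 256 := by decide
lemma bound_N2L : ∀ m ∈ N2L, m < 256 := by decide

lemma common_mask {X : Set α} (h1 : N1.IsBase X) (h2 : N2.IsBase X) :
    ∃ m ∈ CBNL, X = ↑(dec m) := by
  obtain ⟨m, hm, rfl⟩ := h1
  obtain ⟨m', hm', hcoe⟩ := h2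
  have : dec m = dec m' := Finset.coe_injective hcoe
  have hmm : m = m' := dec_inj (bound_N1L _ hm) (bound_N2L _ hm') this
  exact ⟨m, mem_CBNL m hm (hmm ▸ hm'), rfl⟩

lemma invariant : ∀ x ∈ CBNL, ∀ y ∈ CBNL, x.testBit 2 = true →
    (dec x \ dec y).card = 1 → y.testBit 2 = true := by decide

lemma rcbM : ∀ B B' : Set α, M1.IsBase B → M2.IsBase B → M1.IsBase B' → M2.IsBase B' →
    Conn M1 M2 B B' := by
  intro B B' h1 h2 h1' h2'
  obtain ⟨m, hm, rfl⟩ := h1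
  obtain ⟨ma, hma, hcoe⟩ := h2
  have hmm : m = ma := dec_inj (bound_M1L _ hm) (bound_M2L _ hma) (Finset.coe_injective hcoe)
  obtain ⟨m', hm', rfl⟩ := h1'
  obtain ⟨mb, hmb, hcoe'⟩ := h2'
  have hmm' : m' = mb := dec_inj (bound_M1L _ hm') (bound_M2L _ hmb) (Finset.coe_injective hcoe')
  exact (toHub m (mem_CBL m hm (hmm ▸ hma))).trans (fromHub m' (mem_CBL m' hm' (hmm' ▸ hmb)))

lemma fwd1 : ∀ m ∈ N1L, ∃ m₁ ∈ M1L, ∃ m₂ ∈ M1L, m₁ &&& m₂ = 0 ∧ m₁ ||| m₂ = m := by decide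
lemma bwd1 : ∀ m₁ ∈ M1L, ∀ m₂ ∈ M1L, m₁ &&& m₂ = 0 → (m₁ ||| m₂) ∈ N1L := by decide
lemma fwd2 : ∀ m ∈ N2L, ∃ m₁ ∈ M2L, ∃ m₂ ∈ M2L, m₁ &&& m₂ = 0 ∧ m₁ ||| m₂ = m := by decide
lemma bwd2 : ∀ m₁ ∈ M2L, ∀ m₂ ∈ M2L, m₁ &&& m₂ = 0 → (m₁ ||| m₂) ∈ N2L := by decide

end Stmt15Aux

theorem stmt_15 :
    ∃ (E : Type) (M₁ M₂ N₁ N₂ : Matroid E),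
      RCB M₁ M₂ ∧
      (∀ B : Set E, N₁.IsBase B ↔
        ∃ B₁ B₂ : Set E, M₁.IsBase B₁ ∧ M₁.IsBase B₂ ∧ Disjoint B₁ B₂ ∧ B = B₁ ∪ B₂) ∧
      (∀ B : Set E, N₂.IsBase B ↔
        ∃ B₁ B₂ : Set E, M₂.IsBase B₁ ∧ M₂.IsBase B₂ ∧ Disjoint B₁ B₂ ∧ B = B₁ ∪ B₂) ∧
      ¬ RCB N₁ N₂ := by
  classical
  refine ⟨Fin 8, Stmt15Aux.M1, Stmt15Aux.M2, Stmt15Aux.N1, Stmt15Aux.N2, ?_, ?_, ?_, ?_⟩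
  · exact Stmt15Aux.rcbM
  · exact Stmt15Aux.union_char Stmt15Aux.M1_base Stmt15Aux.N1_base Stmt15Aux.bound_M1L
      Stmt15Aux.fwd1 Stmt15Aux.bwd1
  · exact Stmt15Aux.union_char Stmt15Aux.M2_base Stmt15Aux.N2_base Stmt15Aux.bound_M2L
      Stmt15Aux.fwd2 Stmt15Aux.bwd2
  · intro hrcb
    obtain ⟨n, seq, h0, hl, hb, hs⟩ := hrcb ↑(Stmt15Aux.dec 207) ↑(Stmt15Aux.dec 123)
      ⟨207, by decide, rfl⟩ ⟨207, by decide, rfl⟩ ⟨123, by decide, rfl⟩ ⟨123, by decide, rfl⟩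
    have key : ∀ i : Fin (n + 1), (2 : Fin 8) ∈ seq i := by
      intro i
      induction i using Fin.induction with
      | zero =>
        rw [h0]
        exact Stmt15Aux.mem_dec.mpr (by decide)
      | succ i ih =>
        obtain ⟨x, hx, ex⟩ := Stmt15Aux.common_mask (hb i.castSucc).1 (hb i.castSucc).2
        obtain ⟨y, hy, ey⟩ := Stmt15Aux.common_mask (hb i.succ).1 (hb i.succ).2
        have hcard := (hs i).1
        rw [ex, ey, ← Finset.coe_sdiff, Set.ncard_coe_finset] at hcard
        have hx2 : x.testBit 2 = true := by
          rw [ex] at ih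
          exact Stmt15Aux.mem_dec.mp ih
        have hy2 := Stmt15Aux.invariant x hx y hy hx2 hcard
        rw [ey]
        exact Stmt15Aux.mem_dec.mpr hy2
    have := key (Fin.last n)
    rw [hl] at this
    exact absurd (Stmt15Aux.mem_dec.mp this) (by decide)
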